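/- For every natural number n ≥ 3 and every r ∈ (0,1), if K can be covered by s = (1+1/r)^n Θ_n homothetic copies of K with ratio r, then for any Borel probability measure ν on K, Δ(ν) ≤ 2 − 2(1−r)(1+1/r)^{−n}/Θ_n, where Θ_n ≥ 1 is any upper bound on the number-normalizing covering density. -/

import Mathlib

open MeasureTheory Pointwise

theorem stmt_9 {E : Type*} [NormedAddCommGroup E] [NormedSpace ℝ E]
    [MeasurableSpace E] [BorelSpace E] [FiniteDimensional ℝ E]
    (n : ℕ) (hn : 3 ≤ n) (hdim : Module.finrank ℝ E = n)
    (r : ℝ) (hr : r ∈ Set.Ioo (0 : ℝ) 1)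
    (Θ : ℝ) (hΘ : 1 ≤ Θ)
    (N : ℕ) (hN : (N : ℝ) ≤ (1 + 1 / r) ^ n * Θ)
    (a : Fin N → E)
    (hcover : Metric.closedBall (0 : E) 1 ⊆
      ⋃ i, a i +ᵥ r • Metric.closedBall (0 : E) 1)
    (ν : Measure E) [IsProbabilityMeasure ν]
    (hν : ν (Metric.closedBall (0 : E) 1) = 1) :
    (∫ x, ∫ y, ‖x - y‖ ∂ν ∂ν) ≤ 2 - 2 * (1 - r) * ((1 + 1 / r) ^ n)⁻¹ / Θ := by
  obtain ⟨hr0, hr1⟩ := hr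
  set K := Metric.closedBall (0 : E) 1 with hKdef
  have hKm : MeasurableSet K := measurableSet_closedBall
  have hBall : ∀ i : Fin N, a i +ᵥ r • K = Metric.closedBall (a i) r := by
    intro i
    rw [hKdef, smul_closedBall _ _ (by norm_num : (0:ℝ) ≤ 1), smul_zero, vadd_closedBall_zero,
      Real.norm_of_nonneg hr0.le, mul_one]
  -- the (partial) cover, ℕ-indexed
  set B : ℕ → Set E := fun k =>
    if h : k < N then K ∩ Metric.closedBall (a ⟨k, h⟩) r else ∅ with hBdef
  have hBm : ∀ k, MeasurableSet (B k) := by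
    intro k
    by_cases h : k < N
    · simp only [hBdef, dif_pos h]
      exact hKm.inter measurableSet_closedBall
    · simp only [hBdef, dif_neg h]
      exact MeasurableSet.empty
  set D : ℕ → Set E := disjointed B with hDdef
  have hDm : ∀ k, MeasurableSet (D k) := fun k => MeasurableSet.disjointed hBm k
  have hDdisj : Pairwise (Function.onFun Disjoint D) := disjoint_disjointed B
  have hDsub : ∀ k, D k ⊆ B k := fun k => disjointed_subset B k
  have hDempty : ∀ k, N ≤ k → D k = ∅ := by
    intro k hk
    have : B k = ∅ := by simp [hBdef, Nat.not_lt.mpr hk]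
    exact Set.subset_empty_iff.mp (this ▸ hDsub k)
  have hUB : (⋃ k, B k) = K := by
    apply Set.Subset.antisymm
    · apply Set.iUnion_subset
      intro k
      by_cases h : k < N
      · simp only [hBdef, dif_pos h]; exact Set.inter_subset_left
      · simp [hBdef, dif_neg h]
    · intro x hx
      obtain ⟨s, ⟨i, rfl⟩, hxs⟩ := hcover hx
      have hxs' : x ∈ Metric.closedBall (a i) r := by rw [← hBall i]; exact hxs
      refine Set.mem_iUnion.mpr ⟨i.1, ?_⟩
      simp only [hBdef, dif_pos i.isLt]
      exact ⟨hx, by simpa [Fin.eta] using hxs'⟩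
  have hUD : (⋃ k, D k) = K := by rw [hDdef, iUnion_disjointed, hUB]
  -- masses
  set q : ℕ → ℝ := fun k => (ν (D k)).toReal with hqdef
  have hq0 : ∀ k, 0 ≤ q k := fun k => ENNReal.toReal_nonneg
  have hsumq : ∑ k ∈ Finset.range N, q k = 1 := by
    have h1 : ∑' k, ν (D k) = 1 := by
      rw [← measure_iUnion hDdisj hDm, hUD, hν]
    have h2 : ∑' k, ν (D k) = ∑ k ∈ Finset.range N, ν (D k) := by
      apply tsum_eq_sum
      intro k hk
      rw [hDempty k (Nat.not_lt.mp (by simpa using hk))]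
      simp
    rw [h2] at h1
    have := congrArg ENNReal.toReal h1
    rwa [ENNReal.toReal_sum (fun k _ => measure_ne_top ν _), ENNReal.toReal_one] at this
  -- a.e. in K
  have hae : ∀ᵐ x ∂ν, x ∈ K := by
    have hc : ν Kᶜ = 0 := by
      have := measure_compl hKm (measure_ne_top ν K)
      rw [hν, measure_univ] at this
      simpa using this
    rw [ae_iff]
    exact hc
  -- indicator functions
  set ind : ℕ → E → ℝ := fun k => (D k).indicator 1 with hinddef
  have hind_int : ∀ k, Integrable (ind k) ν :=
    fun k => (integrable_const (1:ℝ)).indicator (hDm k)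
  have hind01 : ∀ k x, 0 ≤ ind k x ∧ ind k x ≤ 1 := by
    intro k x
    simp only [hinddef, Set.indicator]
    split <;> norm_num
  -- key pointwise bound
  have hkey : ∀ x ∈ K, ∀ y ∈ K, ‖x - y‖ ≤
      2 - (2 - 2*r) * ∑ k ∈ Finset.range N, ind k x * ind k y := by
    intro x hx y hy
    obtain ⟨k₀, hk₀⟩ := Set.mem_iUnion.mp (hUD ▸ hx)
    obtain ⟨k₁, hk₁⟩ := Set.mem_iUnion.mp (hUD ▸ hy)
    have hk₀N : k₀ < N := by
      by_contra h
      rw [hDempty k₀ (Nat.not_lt.mp h)] at hk₀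
      exact hk₀
    have hmemx : ∀ k, x ∈ D k → k = k₀ := by
      intro k hk
      by_contra h
      exact (hDdisj h).le_bot ⟨hk, hk₀⟩
    have hmemy : ∀ k, y ∈ D k → k = k₁ := by
      intro k hk
      by_contra h
      exact (hDdisj h).le_bot ⟨hk, hk₁⟩
    by_cases hkk : k₀ = k₁
    · -- same piece: distance ≤ 2r
      subst hkk
      have hsum : ∑ k ∈ Finset.range N, ind k x * ind k y = 1 := by
        rw [Finset.sum_eq_single k₀]
        · simp [hinddef, Set.indicator_of_mem hk₀, Set.indicator_of_mem hk₁]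
        · intro k _ hk
          have : x ∉ D k := fun hc => hk (hmemx k hc)
          simp [hinddef, Set.indicator_of_notMem this]
        · intro h
          exact absurd (Finset.mem_range.mpr hk₀N) h
      rw [hsum, mul_one]
      have hxB := hDsub k₀ hk₀
      have hyB := hDsub k₀ hk₁
      simp only [hBdef, dif_pos hk₀N] at hxB hyB
      have h1 : dist x (a ⟨k₀, hk₀N⟩) ≤ r := Metric.mem_closedBall.mp hxB.2
      have h2 : dist y (a ⟨k₀, hk₀N⟩) ≤ r := Metric.mem_closedBall.mp hyB.2
      have : dist x y ≤ 2 * r := by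
        calc dist x y ≤ dist x (a ⟨k₀, hk₀N⟩) + dist (a ⟨k₀, hk₀N⟩) y := dist_triangle _ _ _
        _ ≤ r + r := add_le_add h1 (by rwa [dist_comm])
        _ = 2 * r := by ring
      rw [← dist_eq_norm]
      linarith
    · -- different pieces: distance ≤ 2
      have hsum : ∑ k ∈ Finset.range N, ind k x * ind k y = 0 := by
        apply Finset.sum_eq_zero
        intro k _
        by_cases hx' : x ∈ D k
        · have := hmemx k hx'
          subst this
          have : y ∉ D k := fun hc => hkk (hmemy k hc)
          simp [hinddef, Set.indicator_of_notMem this]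
        · simp [hinddef, Set.indicator_of_notMem hx']
      rw [hsum, mul_zero, sub_zero]
      have hx1 : ‖x‖ ≤ 1 := mem_closedBall_zero_iff.mp hx
      have hy1 : ‖y‖ ≤ 1 := mem_closedBall_zero_iff.mp hy
      calc ‖x - y‖ ≤ ‖x‖ + ‖y‖ := norm_sub_le x y
      _ ≤ 2 := by linarith
  -- integrability facts
  have hIy : ∀ x : E, Integrable (fun y => ‖x - y‖) ν := by
    intro x
    refine Integrable.mono' (integrable_const (‖x‖ + 1))
      ((continuous_const.sub continuous_id).norm.aestronglyMeasurable) ?_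
    filter_upwards [hae] with y hy
    have : ‖y‖ ≤ 1 := mem_closedBall_zero_iff.mp hy
    rw [Real.norm_of_nonneg (norm_nonneg _)]
    calc ‖x - y‖ ≤ ‖x‖ + ‖y‖ := norm_sub_le x y
    _ ≤ ‖x‖ + 1 := by linarith
  have hIg : ∀ x : E, Integrable
      (fun y => 2 - (2 - 2*r) * ∑ k ∈ Finset.range N, ind k x * ind k y) ν := by
    intro x
    exact (integrable_const 2).sub
      (((integrable_finset_sum (Finset.range N)
        (fun k _ => (hind_int k).const_mul (ind k x)))).const_mul _)
  -- inner integral of the majorant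
  have hinner : ∀ x : E,
      (∫ y, (2 - (2 - 2*r) * ∑ k ∈ Finset.range N, ind k x * ind k y) ∂ν)
        = 2 - (2 - 2*r) * ∑ k ∈ Finset.range N, ind k x * q k := by
    intro x
    rw [integral_sub (integrable_const 2)
      (((integrable_finset_sum (Finset.range N)
        (fun k _ => (hind_int k).const_mul (ind k x)))).const_mul _),
      integral_const, integral_const_mul,
      integral_finset_sum _ (fun k _ => (hind_int k).const_mul (ind k x))]
    simp only [probReal_univ, one_smul]
    congr 2
    apply Finset.sum_congr rfl
    intro k _
    rw [integral_const_mul]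
    congr 1
    have : ind k = (D k).indicator (fun _ => (1:ℝ)) := rfl
    rw [this, integral_indicator_const (1:ℝ) (hDm k)]
    simp [hqdef, measureReal_def]
  -- F: inner distance integral
  set F : E → ℝ := fun x => ∫ y, ‖x - y‖ ∂ν with hFdef
  have hFm : StronglyMeasurable F := by
    have hc : Continuous fun p : E × E => ‖p.1 - p.2‖ :=
      (continuous_fst.sub continuous_snd).norm
    exact hc.stronglyMeasurable.integral_prod_right'
  have hFbound : ∀ᵐ x ∂ν, ‖F x‖ ≤ 2 := by
    filter_upwards [hae] with x hx
    have h1 : 0 ≤ F x := integral_nonneg (fun y => norm_nonneg _)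
    have h2 : F x ≤ 2 := by
      have : (∫ y, ‖x - y‖ ∂ν) ≤ ∫ _, (2:ℝ) ∂ν := by
        apply integral_mono_ae (hIy x) (integrable_const 2)
        filter_upwards [hae] with y hy
        have hx1 : ‖x‖ ≤ 1 := mem_closedBall_zero_iff.mp hx
        have hy1 : ‖y‖ ≤ 1 := mem_closedBall_zero_iff.mp hy
        calc ‖x - y‖ ≤ ‖x‖ + ‖y‖ := norm_sub_le x y
        _ ≤ 2 := by linarith
      simpa using this
    rw [Real.norm_of_nonneg h1]
    exact h2
  have hFint : Integrable F ν :=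
    Integrable.mono' (integrable_const 2) hFm.aestronglyMeasurable hFbound
  -- G: the majorant after inner integration
  set G : E → ℝ := fun x => 2 - (2 - 2*r) * ∑ k ∈ Finset.range N, ind k x * q k with hGdef
  have hGint : Integrable G ν :=
    (integrable_const 2).sub
      (((integrable_finset_sum (Finset.range N)
        (fun k _ => (hind_int k).mul_const (q k)))).const_mul _)
  have hFG : ∀ᵐ x ∂ν, F x ≤ G x := by
    filter_upwards [hae] with x hx
    have : F x ≤ ∫ y, (2 - (2 - 2*r) * ∑ k ∈ Finset.range N, ind k x * ind k y) ∂ν := by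
      apply integral_mono_ae (hIy x) (hIg x)
      filter_upwards [hae] with y hy
      exact hkey x hx y hy
    rwa [hinner x] at this
  have hmain : (∫ x, F x ∂ν) ≤ ∫ x, G x ∂ν := integral_mono_ae hFint hGint hFG
  -- compute ∫ G
  have hGval : (∫ x, G x ∂ν) = 2 - (2 - 2*r) * ∑ k ∈ Finset.range N, q k * q k := by
    rw [hGdef]
    rw [integral_sub (integrable_const 2)
      (((integrable_finset_sum (Finset.range N)
        (fun k _ => (hind_int k).mul_const (q k)))).const_mul _),
      integral_const, integral_const_mul,
      integral_finset_sum _ (fun k _ => (hind_int k).mul_const (q k))]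
    simp only [probReal_univ, one_smul]
    congr 2
    apply Finset.sum_congr rfl
    intro k _
    rw [integral_mul_const]
    congr 1
    have : ind k = (D k).indicator (fun _ => (1:ℝ)) := rfl
    rw [this, integral_indicator_const (1:ℝ) (hDm k)]
    simp [hqdef, measureReal_def]
  -- N ≥ 1
  have hN0 : 0 < N := by
    by_contra h
    push_neg at h
    have hNz : N = 0 := Nat.le_zero.mp h
    have h0 : (0:E) ∈ K := Metric.mem_closedBall_self (by norm_num)
    obtain ⟨s, ⟨i, rfl⟩, _⟩ := hcover h0
    exact absurd i.isLt (by omega)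
  -- Cauchy-Schwarz
  have hCS : (1:ℝ) ≤ N * ∑ k ∈ Finset.range N, q k * q k := by
    have := sq_sum_le_card_mul_sum_sq (s := Finset.range N) (f := q)
    rw [hsumq] at this
    simpa [sq] using this
  have hpos : (0:ℝ) < (1 + 1/r) ^ n * Θ := by
    have h1 : (0:ℝ) < 1 + 1/r := by positivity
    positivity
  have hSge : ((1 + 1/r) ^ n)⁻¹ / Θ ≤ ∑ k ∈ Finset.range N, q k * q k := by
    have hNpos : (0:ℝ) < N := by exact_mod_cast hN0
    have hS1 : 1 / (N:ℝ) ≤ ∑ k ∈ Finset.range N, q k * q k := by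
      rw [div_le_iff₀ hNpos]
      linarith [hCS]
    have hS2 : ((1 + 1/r) ^ n)⁻¹ / Θ ≤ 1 / (N:ℝ) := by
      rw [div_eq_mul_inv, ← mul_inv, ← one_div]
      exact one_div_le_one_div_of_le hNpos hN
    linarith
  -- finish
  calc (∫ x, ∫ y, ‖x - y‖ ∂ν ∂ν) = ∫ x, F x ∂ν := rfl
  _ ≤ ∫ x, G x ∂ν := hmain
  _ = 2 - (2 - 2*r) * ∑ k ∈ Finset.range N, q k * q k := hGval
  _ ≤ 2 - 2 * (1 - r) * (((1 + 1/r) ^ n)⁻¹ / Θ) := by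
    have h2r : (0:ℝ) ≤ 2 - 2*r := by linarith
    have := mul_le_mul_of_nonneg_left hSge h2r
    nlinarith [this]
  _ = 2 - 2 * (1 - r) * ((1 + 1/r) ^ n)⁻¹ / Θ := by ring
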